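/- Let X₁, …, X_n be normed spaces, (Y,d) a metric space, a = (a₁, …, a_n) ∈ X₁ × ⋯ × X_n, and let p₁, p₂, q₁, q₂ satisfy condition (★) with p₁ < p₂, and set α = q₂p₁/(q₁p₂). Every arbitrary map f : X₁ × ⋯ × X_n → Y which is strongly ((q₁,1),p₁)-summing at a is strongly ((q₂,α),p₂)-summing at a. -/

import Mathlib

open scoped BigOperators

/-- An arbitrary map `f : X₁ × ⋯ × X_n → Y` from a product of normed spaces to a metric
space is strongly `((q,α),p)`-summing at `a = (a₁,…,aₙ)` if there is `C ≥ 0` with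
`(∑ⱼ d(f(a+xⱼ), f(a))^q)^{1/α} ≤ C ⋅ sup_{φ∈B} ∑ⱼ |φ(xⱼ¹,…,xⱼⁿ)|^p` for all finite
families, where `B` is the closed unit ball of the space of continuous `n`-linear scalar
forms on `X₁ × ⋯ × X_n`. -/
def MapStronglySummingAt {𝕜 : Type*} [RCLike 𝕜] {n : ℕ} {X : Fin n → Type*}
    [∀ i, NormedAddCommGroup (X i)] [∀ i, NormedSpace 𝕜 (X i)]
    {Y : Type*} [MetricSpace Y]
    (q α p : ℝ) (f : (∀ i, X i) → Y) (a : ∀ i, X i) : Prop :=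
  ∃ C : ℝ, 0 ≤ C ∧ ∀ (m : ℕ) (x : Fin m → ∀ i, X i),
    (∑ j, dist (f (a + x j)) (f a) ^ q) ^ (1 / α) ≤
      C * ⨆ φ : {φ : ContinuousMultilinearMap 𝕜 X 𝕜 // ‖φ‖ ≤ 1},
        ∑ j, ‖φ.1 (x j)‖ ^ p

section helpers
variable {𝕜 : Type*} [RCLike 𝕜] {n : ℕ} {X : Fin n → Type*}
    [∀ i, NormedAddCommGroup (X i)] [∀ i, NormedSpace 𝕜 (X i)]
    {Y : Type*} [MetricSpace Y]

lemma aux_two_rpow_le {x y t : ℝ} (hx : 0 ≤ x) (hy : 0 ≤ y) (ht : 1 ≤ t) :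
    x ^ t + y ^ t ≤ (x + y) ^ t := by
  have h := NNReal.coe_le_coe.2 (NNReal.rpow_add_rpow_le_add (⟨x, hx⟩ : NNReal) ⟨y, hy⟩ ht)
  push_cast at h
  have h2 := Real.rpow_le_rpow (by positivity) h (by linarith : (0:ℝ) ≤ t)
  rwa [← Real.rpow_mul (by positivity), one_div, inv_mul_cancel₀ (by linarith : t ≠ 0),
    Real.rpow_one] at h2

lemma aux_sum_rpow_le {ι : Type*} (s : Finset ι) (a : ι → ℝ) (ha : ∀ j, 0 ≤ a j)
    {t : ℝ} (ht : 1 ≤ t) : ∑ j ∈ s, a j ^ t ≤ (∑ j ∈ s, a j) ^ t := by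
  classical
  induction s using Finset.cons_induction with
  | empty => simp [Real.zero_rpow (by linarith : t ≠ 0)]
  | cons i s his ih =>
    rw [Finset.sum_cons, Finset.sum_cons]
    calc a i ^ t + ∑ j ∈ s, a j ^ t ≤ a i ^ t + (∑ j ∈ s, a j) ^ t := by linarith
      _ ≤ (a i + ∑ j ∈ s, a j) ^ t :=
          aux_two_rpow_le (ha i) (Finset.sum_nonneg fun j _ => ha j) ht

lemma aux_arith (p₁ p₂ q₁ q₂ : ℝ) (hp₁ : 1 ≤ p₁) (hq₁ : 1 ≤ q₁) (hpq₁ : p₁ ≤ q₁) (hpq₂ : p₂ ≤ q₂)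
    (hstar : 1 / p₁ - 1 / q₁ ≤ 1 / p₂ - 1 / q₂) (hlt : p₁ < p₂) : q₁ * p₂ ≤ p₁ * q₂ := by
  have hp₁0 : 0 < p₁ := by linarith
  have hq₁0 : 0 < q₁ := by linarith
  have hp₂0 : 0 < p₂ := by linarith
  have hq₂0 : 0 < q₂ := by linarith
  rw [div_sub_div _ _ (ne_of_gt hp₁0) (ne_of_gt hq₁0), div_sub_div _ _ (ne_of_gt hp₂0) (ne_of_gt hq₂0),
    div_le_div_iff₀ (by positivity) (by positivity)] at hstar
  nlinarith [mul_nonneg (mul_nonneg hq₂0.le (sub_nonneg.2 hpq₁)) (sub_nonneg.2 hlt.le), hp₁0]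
variable {𝕜 : Type*} [RCLike 𝕜] {n : ℕ} {X : Fin n → Type*}
    [∀ i, NormedAddCommGroup (X i)] [∀ i, NormedSpace 𝕜 (X i)]
    {Y : Type*} [MetricSpace Y]

lemma aux_nonempty : Nonempty {φ : ContinuousMultilinearMap 𝕜 X 𝕜 // ‖φ‖ ≤ 1} :=
  ⟨⟨0, by simp⟩⟩

lemma aux_bdd (p : ℝ) (hp : 0 ≤ p) {m : ℕ} (x : Fin m → ∀ i, X i) (w : Fin m → ℝ)
    (hw : ∀ j, 0 ≤ w j) :
    BddAbove (Set.range fun φ : {φ : ContinuousMultilinearMap 𝕜 X 𝕜 // ‖φ‖ ≤ 1} =>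
      ∑ j, w j * ‖φ.1 (x j)‖ ^ p) := by
  refine ⟨∑ j, w j * (∏ i, ‖x j i‖) ^ p, ?_⟩
  rintro _ ⟨φ, rfl⟩
  refine Finset.sum_le_sum fun j _ => mul_le_mul_of_nonneg_left ?_ (hw j)
  refine Real.rpow_le_rpow (norm_nonneg _) ?_ hp
  calc ‖φ.1 (x j)‖ ≤ ‖φ.1‖ * ∏ i, ‖x j i‖ := φ.1.le_opNorm _
    _ ≤ 1 * ∏ i, ‖x j i‖ :=
        mul_le_mul_of_nonneg_right φ.2 (Finset.prod_nonneg fun i _ => norm_nonneg _)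
    _ = ∏ i, ‖x j i‖ := one_mul _

lemma aux_bdd' (p : ℝ) (hp : 0 ≤ p) {m : ℕ} (x : Fin m → ∀ i, X i) :
    BddAbove (Set.range fun φ : {φ : ContinuousMultilinearMap 𝕜 X 𝕜 // ‖φ‖ ≤ 1} =>
      ∑ j, ‖φ.1 (x j)‖ ^ p) := by
  have h := aux_bdd (𝕜 := 𝕜) p hp x (fun _ => 1) (fun _ => zero_le_one)
  simpa using h

/-- repetition lemma: natural number weights -/
lemma aux_nat_weights (q p C : ℝ) (f : (∀ i, X i) → Y) (a : ∀ i, X i)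
    (h : ∀ (m : ℕ) (x : Fin m → ∀ i, X i),
      ∑ j, dist (f (a + x j)) (f a) ^ q ≤
        C * ⨆ φ : {φ : ContinuousMultilinearMap 𝕜 X 𝕜 // ‖φ‖ ≤ 1}, ∑ j, ‖φ.1 (x j)‖ ^ p)
    (m : ℕ) (x : Fin m → ∀ i, X i) (N : Fin m → ℕ) :
    ∑ j, (N j : ℝ) * dist (f (a + x j)) (f a) ^ q ≤
      C * ⨆ φ : {φ : ContinuousMultilinearMap 𝕜 X 𝕜 // ‖φ‖ ≤ 1},
        ∑ j, (N j : ℝ) * ‖φ.1 (x j)‖ ^ p := by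
  classical
  set σt := Sigma (fun j : Fin m => Fin (N j)) with hσt
  let e : σt ≃ Fin (Fintype.card σt) := Fintype.equivFin σt
  have key : ∀ g : (∀ i, X i) → ℝ,
      ∑ k : Fin (Fintype.card σt), g (x (e.symm k).1) = ∑ j, (N j : ℝ) * g (x j) := by
    intro g
    rw [← Equiv.sum_comp e (fun k => g (x (e.symm k).1))]
    simp only [Equiv.symm_apply_apply]
    rw [← Finset.univ_sigma_univ, Finset.sum_sigma]
    simp [Finset.sum_const, nsmul_eq_mul]
  have h2 := h (Fintype.card σt) (fun k => x (e.symm k).1)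
  rw [key (fun v => dist (f (a + v)) (f a) ^ q)] at h2
  have hsup : (⨆ φ : {φ : ContinuousMultilinearMap 𝕜 X 𝕜 // ‖φ‖ ≤ 1},
      ∑ k, ‖φ.1 (x (e.symm k).1)‖ ^ p) =
      ⨆ φ : {φ : ContinuousMultilinearMap 𝕜 X 𝕜 // ‖φ‖ ≤ 1},
        ∑ j, (N j : ℝ) * ‖φ.1 (x j)‖ ^ p := by
    congr 1
    funext φ
    exact key (fun v => ‖φ.1 v‖ ^ p)
  rw [hsup] at h2
  exact h2

/-- real nonnegative weights, losing a factor 2 -/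
lemma aux_real_weights (q p C : ℝ) (hC : 0 ≤ C) (hp : 0 ≤ p)
    (f : (∀ i, X i) → Y) (a : ∀ i, X i)
    (h : ∀ (m : ℕ) (x : Fin m → ∀ i, X i),
      ∑ j, dist (f (a + x j)) (f a) ^ q ≤
        C * ⨆ φ : {φ : ContinuousMultilinearMap 𝕜 X 𝕜 // ‖φ‖ ≤ 1}, ∑ j, ‖φ.1 (x j)‖ ^ p)
    (m : ℕ) (x : Fin m → ∀ i, X i) (w : Fin m → ℝ) (hw : ∀ j, 0 ≤ w j) :
    ∑ j, w j * dist (f (a + x j)) (f a) ^ q ≤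
      2 * C * ⨆ φ : {φ : ContinuousMultilinearMap 𝕜 X 𝕜 // ‖φ‖ ≤ 1},
        ∑ j, w j * ‖φ.1 (x j)‖ ^ p := by
  classical
  haveI : Nonempty {φ : ContinuousMultilinearMap 𝕜 X 𝕜 // ‖φ‖ ≤ 1} := aux_nonempty
  set S := ⨆ φ : {φ : ContinuousMultilinearMap 𝕜 X 𝕜 // ‖φ‖ ≤ 1},
      ∑ j, w j * ‖φ.1 (x j)‖ ^ p with hS
  have hS0 : 0 ≤ S := Real.iSup_nonneg fun φ =>
    Finset.sum_nonneg fun j _ => mul_nonneg (hw j) (Real.rpow_nonneg (norm_nonneg _) _)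
  have hbdd := aux_bdd (𝕜 := 𝕜) p hp x w hw
  by_cases hP : ∀ j, w j = 0
  · have : ∀ j ∈ Finset.univ, w j * dist (f (a + x j)) (f a) ^ q = 0 := by
      intro j _; rw [hP j, zero_mul]
    rw [Finset.sum_eq_zero this]
    positivity
  · push_neg at hP
    obtain ⟨j₀, hj₀⟩ := hP
    have hj₀' : 0 < w j₀ := lt_of_le_of_ne (hw j₀) (Ne.symm hj₀)
    set P : Finset (Fin m) := Finset.univ.filter (fun j => 0 < w j) with hPdef
    have hPne : P.Nonempty := ⟨j₀, by simp [hPdef, hj₀']⟩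
    set k : Fin m → ℤ := fun j => ⌊Real.logb 2 (w j)⌋ with hk
    set K : ℤ := P.inf' hPne k with hK
    set N : Fin m → ℕ := fun j => if 0 < w j then 2 ^ (k j - K).toNat else 0 with hN
    -- basic facts
    have hlow : ∀ j, 0 < w j → (2:ℝ) ^ (k j) ≤ w j := by
      intro j hj
      have h1 : (2:ℝ) ^ ((k j : ℝ)) ≤ (2:ℝ) ^ (Real.logb 2 (w j)) :=
        Real.rpow_le_rpow_of_exponent_le one_le_two (Int.floor_le _)
      rw [Real.rpow_logb (by norm_num) (by norm_num) hj] at h1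
      rwa [Real.rpow_intCast] at h1
    have hhigh : ∀ j, 0 < w j → w j ≤ 2 * (2:ℝ) ^ (k j) := by
      intro j hj
      have h1 : (2:ℝ) ^ (Real.logb 2 (w j)) ≤ (2:ℝ) ^ ((k j : ℝ) + 1) :=
        Real.rpow_le_rpow_of_exponent_le one_le_two (Int.lt_floor_add_one _).le
      rw [Real.rpow_logb (by norm_num) (by norm_num) hj] at h1
      rw [show ((k j : ℝ) + 1) = ((k j + 1 : ℤ) : ℝ) by push_cast; ring, Real.rpow_intCast,
        zpow_add₀ (by norm_num : (2:ℝ) ≠ 0), zpow_one] at h1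
      linarith
    have hNval : ∀ j, 0 < w j → ((N j : ℝ)) = (2:ℝ) ^ (k j - K) := by
      intro j hj
      have hjP : j ∈ P := by simp [hPdef, hj]
      have hKle : K ≤ k j := Finset.inf'_le k hjP
      rw [hN]
      simp only [if_pos hj]
      push_cast
      rw [← zpow_natCast (2:ℝ), Int.toNat_of_nonneg (by omega)]
    -- step 1: LHS ≤ 2 * 2^K * ∑ N j * σ^q
    have step1 : ∑ j, w j * dist (f (a + x j)) (f a) ^ q ≤
        2 * (2:ℝ) ^ K * ∑ j, (N j : ℝ) * dist (f (a + x j)) (f a) ^ q := by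
      rw [Finset.mul_sum]
      refine Finset.sum_le_sum fun j _ => ?_
      by_cases hj : 0 < w j
      · have e1 : 2 * (2:ℝ) ^ K * ((N j : ℝ) * dist (f (a + x j)) (f a) ^ q)
            = (2 * (2:ℝ) ^ (k j)) * dist (f (a + x j)) (f a) ^ q := by
          have hzz : (2:ℝ) ^ K * (2:ℝ) ^ (k j - K) = (2:ℝ) ^ (k j) := by
            rw [← zpow_add₀ (by norm_num : (2:ℝ) ≠ 0)]; ring_nf
          rw [hNval j hj, ← hzz]; ring
        rw [e1]
        exact mul_le_mul_of_nonneg_right (hhigh j hj) (Real.rpow_nonneg dist_nonneg _)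
      · have : w j = 0 := le_antisymm (not_lt.1 hj) (hw j)
        rw [this, zero_mul]
        positivity
    -- step 2: apply nat weights
    have step2 := aux_nat_weights (𝕜 := 𝕜) q p C f a h m x N
    -- step 3: sup with N weights ≤ 2^(-K) * S
    have step3 : (⨆ φ : {φ : ContinuousMultilinearMap 𝕜 X 𝕜 // ‖φ‖ ≤ 1},
        ∑ j, (N j : ℝ) * ‖φ.1 (x j)‖ ^ p) ≤ (2:ℝ) ^ (-K) * S := by
      refine ciSup_le fun φ => ?_
      have hterm : ∀ j, (N j : ℝ) * ‖φ.1 (x j)‖ ^ p ≤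
          (2:ℝ) ^ (-K) * (w j * ‖φ.1 (x j)‖ ^ p) := by
        intro j
        by_cases hj : 0 < w j
        · rw [hNval j hj]
          have : (2:ℝ) ^ (k j - K) = (2:ℝ) ^ (-K) * (2:ℝ) ^ (k j) := by
            rw [← zpow_add₀ (by norm_num : (2:ℝ) ≠ 0)]; ring_nf
          rw [this, mul_assoc]
          refine mul_le_mul_of_nonneg_left ?_ (by positivity)
          exact mul_le_mul_of_nonneg_right (hlow j hj) (Real.rpow_nonneg (norm_nonneg _) _)
        · have h0 : N j = 0 := by rw [hN]; simp [hj]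
          rw [h0]
          push_cast
          rw [zero_mul]
          have : w j = 0 := le_antisymm (not_lt.1 hj) (hw j)
          rw [this]; simp
      calc ∑ j, (N j : ℝ) * ‖φ.1 (x j)‖ ^ p
          ≤ ∑ j, (2:ℝ) ^ (-K) * (w j * ‖φ.1 (x j)‖ ^ p) :=
            Finset.sum_le_sum fun j _ => hterm j
        _ = (2:ℝ) ^ (-K) * ∑ j, w j * ‖φ.1 (x j)‖ ^ p := by rw [← Finset.mul_sum]
        _ ≤ (2:ℝ) ^ (-K) * S := by
            refine mul_le_mul_of_nonneg_left ?_ (by positivity)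
            exact le_ciSup hbdd φ
    -- combine
    calc ∑ j, w j * dist (f (a + x j)) (f a) ^ q
        ≤ 2 * (2:ℝ) ^ K * ∑ j, (N j : ℝ) * dist (f (a + x j)) (f a) ^ q := step1
      _ ≤ 2 * (2:ℝ) ^ K * (C * ((2:ℝ) ^ (-K) * S)) := by
          refine mul_le_mul_of_nonneg_left ?_ (by positivity)
          exact le_trans step2 (mul_le_mul_of_nonneg_left step3 hC)
      _ = 2 * C * S * ((2:ℝ) ^ K * (2:ℝ) ^ (-K)) := by ring
      _ = 2 * C * S := by
          rw [← zpow_add₀ (by norm_num : (2:ℝ) ≠ 0)]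
          simp

end helpers

/-- If `p₁, p₂, q₁, q₂` satisfy condition (★) with `p₁ < p₂` and
`α = q₂p₁/(q₁p₂)`, then every arbitrary map `f : X₁ × ⋯ × X_n → Y` which is strongly
`((q₁,1),p₁)`-summing at `a` is strongly `((q₂,α),p₂)`-summing at `a`. -/
theorem stmt9 {𝕜 : Type*} [RCLike 𝕜] {n : ℕ} {X : Fin n → Type*}
    [∀ i, NormedAddCommGroup (X i)] [∀ i, NormedSpace 𝕜 (X i)]
    {Y : Type*} [MetricSpace Y]
    (p₁ p₂ q₁ q₂ : ℝ)
    (hp₁ : 1 ≤ p₁) (hp₁₂ : p₁ ≤ p₂) (hq₁ : 1 ≤ q₁) (hq₁₂ : q₁ ≤ q₂)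
    (hpq₁ : p₁ ≤ q₁) (hpq₂ : p₂ ≤ q₂)
    (hstar : 1 / p₁ - 1 / q₁ ≤ 1 / p₂ - 1 / q₂)
    (hlt : p₁ < p₂)
    (f : (∀ i, X i) → Y) (a : ∀ i, X i)
    (hf : MapStronglySummingAt (𝕜 := 𝕜) q₁ 1 p₁ f a) :
    MapStronglySummingAt (𝕜 := 𝕜) q₂ (q₂ * p₁ / (q₁ * p₂)) p₂ f a := by
  classical
  haveI : Nonempty {φ : ContinuousMultilinearMap 𝕜 X 𝕜 // ‖φ‖ ≤ 1} := aux_nonempty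
  obtain ⟨C, hC, hCi⟩ := hf
  -- positivity facts
  have hp₁0 : 0 < p₁ := by linarith
  have hp₂0 : 0 < p₂ := by linarith
  have hq₁0 : 0 < q₁ := by linarith
  have hq₂0 : 0 < q₂ := by linarith
  have hqlt : q₁ < q₂ := by
    have h1 : 1 / p₂ < 1 / p₁ := one_div_lt_one_div_of_lt hp₁0 hlt
    have h2 : 1 / q₂ < 1 / q₁ := by linarith
    by_contra hcon
    push_neg at hcon
    have := one_div_le_one_div_of_le hq₂0 hcon
    linarith
  have harith : q₁ * p₂ ≤ p₁ * q₂ := aux_arith p₁ p₂ q₁ q₂ hp₁ hq₁ hpq₁ hpq₂ hstar hlt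
  -- normalized hypothesis
  have h' : ∀ (m : ℕ) (x : Fin m → ∀ i, X i),
      ∑ j, dist (f (a + x j)) (f a) ^ q₁ ≤
        C * ⨆ φ : {φ : ContinuousMultilinearMap 𝕜 X 𝕜 // ‖φ‖ ≤ 1},
          ∑ j, ‖φ.1 (x j)‖ ^ p₁ := by
    intro m x
    have := hCi m x
    rwa [show (1:ℝ)/1 = 1 by norm_num, Real.rpow_one] at this
  refine ⟨(2 * C) ^ (p₂ / p₁), Real.rpow_nonneg (by linarith) _, ?_⟩
  intro m x
  set A := ∑ j, dist (f (a + x j)) (f a) ^ q₂ with hAdef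
  set S := ⨆ φ : {φ : ContinuousMultilinearMap 𝕜 X 𝕜 // ‖φ‖ ≤ 1},
      ∑ j, ‖φ.1 (x j)‖ ^ p₂ with hSdef
  have hA0 : 0 ≤ A :=
    Finset.sum_nonneg fun j _ => Real.rpow_nonneg dist_nonneg _
  have hS0 : 0 ≤ S := Real.iSup_nonneg fun φ =>
    Finset.sum_nonneg fun j _ => Real.rpow_nonneg (norm_nonneg _) _
  -- the key intermediate bound
  have key : A ^ (q₁ / q₂) ≤ 2 * C * S ^ (p₁ / p₂) := by
    -- weighted inequality with weights σ^(q₂-q₁)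
    have hwineq := aux_real_weights q₁ p₁ C hC (by linarith) f a h' m x
      (fun j => dist (f (a + x j)) (f a) ^ (q₂ - q₁))
      (fun j => Real.rpow_nonneg dist_nonneg _)
    have hlhs : ∑ j, dist (f (a + x j)) (f a) ^ (q₂ - q₁) * dist (f (a + x j)) (f a) ^ q₁
        = A := by
      refine Finset.sum_congr rfl fun j _ => ?_
      rw [← Real.rpow_add' dist_nonneg (by intro hcon; simp at hcon; linarith)]
      norm_num
    rw [hlhs] at hwineq
    set T := ⨆ φ : {φ : ContinuousMultilinearMap 𝕜 X 𝕜 // ‖φ‖ ≤ 1},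
        ∑ j, dist (f (a + x j)) (f a) ^ (q₂ - q₁) * ‖φ.1 (x j)‖ ^ p₁ with hTdef
    -- Hölder bound for each φ
    have hT : T ≤ A ^ (1 - q₁ / q₂) * S ^ (p₁ / p₂) := by
      refine ciSup_le fun φ => ?_
      have hconj : Real.HolderConjugate (q₂ / (q₂ - q₁)) (q₂ / q₁) := by
        rw [Real.holderConjugate_iff]
        constructor
        · rw [lt_div_iff₀ (by linarith)]; linarith
        · field_simp
          ring
      have hh := Real.inner_le_Lp_mul_Lq Finset.univ
        (fun j => dist (f (a + x j)) (f a) ^ (q₂ - q₁))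
        (fun j => ‖φ.1 (x j)‖ ^ p₁) hconj
      simp only [abs_of_nonneg (Real.rpow_nonneg dist_nonneg _),
        abs_of_nonneg (Real.rpow_nonneg (norm_nonneg _) _)] at hh
      have e1 : ∀ j, (dist (f (a + x j)) (f a) ^ (q₂ - q₁)) ^ (q₂ / (q₂ - q₁))
          = dist (f (a + x j)) (f a) ^ q₂ := by
        intro j
        rw [← Real.rpow_mul dist_nonneg]
        congr 1
        rw [mul_comm]
        exact div_mul_cancel₀ q₂ (ne_of_gt (by linarith : (0:ℝ) < q₂ - q₁))
      have e2 : ∀ j, (‖φ.1 (x j)‖ ^ p₁) ^ (q₂ / q₁) = ‖φ.1 (x j)‖ ^ (p₁ * (q₂ / q₁)) := by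
        intro j
        rw [← Real.rpow_mul (norm_nonneg _)]
      simp only [e1, e2] at hh
      -- second factor bound
      have hsec : ∑ j, ‖φ.1 (x j)‖ ^ (p₁ * (q₂ / q₁)) ≤ S ^ (p₁ * (q₂ / q₁) / p₂) := by
        have hs1 : 1 ≤ p₁ * (q₂ / q₁) / p₂ := by
          rw [le_div_iff₀ hp₂0]
          rw [mul_comm p₁ (q₂ / q₁), div_mul_eq_mul_div, le_div_iff₀ hq₁0]
          linarith
        have e3 : ∀ j, ‖φ.1 (x j)‖ ^ (p₁ * (q₂ / q₁))
            = (‖φ.1 (x j)‖ ^ p₂) ^ (p₁ * (q₂ / q₁) / p₂) := by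
          intro j
          rw [← Real.rpow_mul (norm_nonneg _)]
          congr 1
          field_simp
        simp only [e3]
        calc ∑ j, (‖φ.1 (x j)‖ ^ p₂) ^ (p₁ * (q₂ / q₁) / p₂)
            ≤ (∑ j, ‖φ.1 (x j)‖ ^ p₂) ^ (p₁ * (q₂ / q₁) / p₂) :=
              aux_sum_rpow_le _ _ (fun j => Real.rpow_nonneg (norm_nonneg _) _) hs1
          _ ≤ S ^ (p₁ * (q₂ / q₁) / p₂) := by
              refine Real.rpow_le_rpow (Finset.sum_nonneg fun j _ =>
                Real.rpow_nonneg (norm_nonneg _) _) ?_ (by linarith)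
              exact le_ciSup (aux_bdd' p₂ (by linarith) x) φ
      calc ∑ j, dist (f (a + x j)) (f a) ^ (q₂ - q₁) * ‖φ.1 (x j)‖ ^ p₁
          ≤ A ^ (1 / (q₂ / (q₂ - q₁))) *
              (∑ j, ‖φ.1 (x j)‖ ^ (p₁ * (q₂ / q₁))) ^ (1 / (q₂ / q₁)) := hh
        _ ≤ A ^ (1 / (q₂ / (q₂ - q₁))) *
              (S ^ (p₁ * (q₂ / q₁) / p₂)) ^ (1 / (q₂ / q₁)) := by
            refine mul_le_mul_of_nonneg_left ?_ (Real.rpow_nonneg hA0 _)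
            refine Real.rpow_le_rpow (Finset.sum_nonneg fun j _ =>
              Real.rpow_nonneg (norm_nonneg _) _) hsec (by positivity)
        _ = A ^ (1 - q₁ / q₂) * S ^ (p₁ / p₂) := by
            have g1 : (1 : ℝ) / (q₂ / (q₂ - q₁)) = 1 - q₁ / q₂ := by
              rw [one_div_div, sub_div, div_self (ne_of_gt hq₂0)]
            have g2 : p₁ * (q₂ / q₁) / p₂ * (1 / (q₂ / q₁)) = p₁ / p₂ := by
              rw [one_div_div]
              field_simp
            rw [← Real.rpow_mul hS0, g1, g2]
    -- combine: A ≤ 2C * (A^(1-q₁/q₂) * S^(p₁/p₂))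
    have hmain : A ≤ 2 * C * (A ^ (1 - q₁ / q₂) * S ^ (p₁ / p₂)) :=
      le_trans hwineq (mul_le_mul_of_nonneg_left hT (by linarith))
    rcases eq_or_lt_of_le hA0 with hA | hA
    · rw [← hA, Real.zero_rpow (by positivity)]
      positivity
    · have hmul := mul_le_mul_of_nonneg_right hmain
        (Real.rpow_nonneg hA0 (q₁ / q₂ - 1))
      have l1 : A ^ (q₁ / q₂) = A * A ^ (q₁ / q₂ - 1) := by
        have := Real.rpow_add hA 1 (q₁ / q₂ - 1)
        rw [Real.rpow_one] at this
        rw [← this]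
        ring_nf
      have l2 : 2 * C * (A ^ (1 - q₁ / q₂) * S ^ (p₁ / p₂)) * A ^ (q₁ / q₂ - 1)
          = 2 * C * S ^ (p₁ / p₂) * (A ^ (1 - q₁ / q₂) * A ^ (q₁ / q₂ - 1)) := by ring
      have l3 : A ^ (1 - q₁ / q₂) * A ^ (q₁ / q₂ - 1) = 1 := by
        rw [← Real.rpow_add hA]
        norm_num
      rw [l1]
      calc A * A ^ (q₁ / q₂ - 1)
          ≤ 2 * C * (A ^ (1 - q₁ / q₂) * S ^ (p₁ / p₂)) * A ^ (q₁ / q₂ - 1) := hmul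
        _ = 2 * C * S ^ (p₁ / p₂) := by rw [l2, l3, mul_one]
  -- finish
  have final := Real.rpow_le_rpow (Real.rpow_nonneg hA0 _) key
    (le_of_lt (by positivity) : (0:ℝ) ≤ p₂ / p₁)
  rw [← Real.rpow_mul hA0, Real.mul_rpow (by linarith) (Real.rpow_nonneg hS0 _),
    ← Real.rpow_mul hS0] at final
  have eS : p₁ / p₂ * (p₂ / p₁) = 1 := by field_simp
  rw [eS, Real.rpow_one] at final
  have eA : q₁ / q₂ * (p₂ / p₁) = 1 / (q₂ * p₁ / (q₁ * p₂)) := by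
    field_simp
  rwa [eA] at final
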